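/- For every configuration S ∈ 𝒟∖{𝒟₀}, f₁(S) ≥ g(S) ≥ f₁(S)/(1 + log f₁(S)), where g(S) = max_{1 ≤ k ≤ N} R_k T_k. -/
import Mathlib


open MeasureTheory Filter
open scoped ENNReal NNReal

namespace EV

/-- A configuration of the exclusion-voter model is the finite hybrid-zone word
(`false` = 0, `true` = 1); the full two-sided configuration is `1^∞ w 0^∞`. -/
abbrev Word := List Bool

/-- Canonical (normalized) words: empty (the ground state `𝒟₀`) or starting with
a `0` and ending with a `1`; these are in bijection with the configuration space `𝒟`. -/
def IsConfig (w : Word) : Prop :=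
  w = [] ∨ (w.head? = some false ∧ w.getLast? = some true)

/-- The ground-state Heaviside configuration `𝒟₀ = …111000…`. -/
def groundState : Word := []

/-- Pad a word with one boundary symbol of the adjacent infinite block on each side. -/
def pad (w : Word) : Word := true :: (w ++ [false])

/-- Normalize: strip leading `1`s (they merge into the left infinite block of `1`s)
and trailing `0`s (they merge into the right infinite block of `0`s). -/
def strip (w : Word) : Word :=
  ((w.dropWhile (· = true)).reverse.dropWhile (· = false)).reverse

def setPair (w : Word) (i : ℕ) (a b : Bool) : Word := (w.set i a).set (i + 1) b

def swapPair (w : Word) (i : ℕ) : Word :=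
  setPair w i (w.getD (i + 1) true) (w.getD i true)

/-- Indices of the unlike adjacent pairs (`01` or `10`), read off the padded word. -/
def unlike (w : Word) : List ℕ :=
  (List.range (w.length + 1)).filter
    (fun i => (pad w).getD i true ≠ (pad w).getD (i + 1) true)

/-- One-step transition kernel of the discrete-time exclusion-voter chain with mixing
parameter `β` and exclusion parameter `p`: an unlike adjacent pair is chosen uniformly
at random; with probability `β` a voter move flips the pair to `00` or `11` (each with
probability `1/2`); with probability `1-β` an exclusion move swaps a `01` with
probability `p` and a `10` with probability `1-p` (otherwise no change). -/
noncomputable def P (β p : ℝ) (w w' : Word) : ℝ :=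
  ((unlike w).map (fun i =>
    let a := (pad w).getD i true
    let swapProb := if a then 1 - p else p
    ((unlike w).length : ℝ)⁻¹ *
      (β * (1 / 2) * (if strip (setPair (pad w) i false false) = w' then 1 else 0)
       + β * (1 / 2) * (if strip (setPair (pad w) i true true) = w' then 1 else 0)
       + (1 - β) * swapProb * (if strip (swapPair (pad w) i) = w' then 1 else 0)
       + (1 - β) * (1 - swapProb) * (if w = w' then 1 else 0)))).sum

/-- `n`-step transition probabilities. -/
noncomputable def Pn (β p : ℝ) : ℕ → Word → Word → ℝ
  | 0 => fun w w' => if w = w' then 1 else 0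
  | n + 1 => fun w w' => ∑' z : Word, Pn β p n w z * P β p z w'

/-- `w'` is accessible from `w`: some `n`-step transition probability is positive. -/
def Accessible (β p : ℝ) (w w' : Word) : Prop :=
  ∃ n : ℕ, 0 < n ∧ 0 < Pn β p n w w'

/-- Two states communicate: each is accessible from the other. -/
def Communicate (β p : ℝ) (w w' : Word) : Prop :=
  Accessible β p w w' ∧ Accessible β p w' w

instance : MeasurableSpace Word := ⊤

/-- `ξ` is (a realization of) the discrete-time exclusion-voter Markov chain with
parameters `(β, p)` under the probability measure `μ`. -/
def IsEVChain (β p : ℝ) {Ω : Type*} [MeasurableSpace Ω] (μ : Measure Ω)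
    (ξ : ℕ → Ω → Word) : Prop :=
  (∀ t, Measurable (ξ t)) ∧
  ∀ (t : ℕ) (path : ℕ → Word),
    μ {ω | ∀ i ≤ t + 1, ξ i ω = path i}
      = μ {ω | ∀ i ≤ t, ξ i ω = path i} * ENNReal.ofReal (P β p (path t) (path (t + 1)))

/-- The relaxation time `τ = min {t ∈ ℕ, t ≥ 1 : ξ_t = 𝒟₀}` (`∞` if there is no such `t`). -/
noncomputable def relaxTime {Ω : Type*} (ξ : ℕ → Ω → Word) (ω : Ω) : ℝ≥0∞ :=
  sInf {r : ℝ≥0∞ | ∃ t : ℕ, 0 < t ∧ ξ t ω = groundState ∧ r = (t : ℝ≥0∞)}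

/-- The size `|S|` of the hybrid zone. -/
def hz (w : Word) : ℕ := w.length

/-- The number of blocks `N(S)`: the number of (finite) `1`-blocks of the hybrid zone. -/
def nb (w : Word) : ℕ :=
  ((Finset.range w.length).filter
    (fun b => w.getD b false = true ∧ (b = 0 ∨ w.getD (b - 1) true = false))).card

/-- Number of `0`s among the first `c` positions of the hybrid zone. -/
def z0 (w : Word) (c : ℕ) : ℕ :=
  ((Finset.range c).filter (fun a => w.getD a true = false)).card

/-- Number of `1`s of the hybrid zone at positions `≥ c`. -/
def o1 (w : Word) (c : ℕ) : ℕ :=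
  ((Finset.Ico c w.length).filter (fun b => w.getD b false = true)).card

/-- `f₁(S) = Σᵢ mᵢ Rᵢ = Σᵢ nᵢ Tᵢ`: each `1` contributes the number of `0`s to its left. -/
def f1 (w : Word) : ℕ :=
  ∑ b ∈ (Finset.range w.length).filter (fun b => w.getD b false = true), z0 w b

/-- `f₂(S) = (1/2)(Σᵢ mᵢ Rᵢ² + Σᵢ nᵢ Tᵢ²)`: each `1` contributes the squared number of
`0`s to its left, each `0` the squared number of `1`s to its right. -/
noncomputable def f2 (w : Word) : ℝ :=
  (1 / 2) *
    ((∑ b ∈ (Finset.range w.length).filter (fun b => w.getD b false = true),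
        ((z0 w b : ℝ)) ^ 2)
     + (∑ a ∈ (Finset.range w.length).filter (fun a => w.getD a true = false),
        ((o1 w (a + 1) : ℝ)) ^ 2))

/-- `g(S) = max_{1 ≤ k ≤ N} R_k T_k`: the maximum over the `01`-corners of
(number of `0`s up to the corner) × (number of `1`s after the corner). -/
def gfun (w : Word) : ℕ :=
  ((Finset.range w.length).filter
    (fun a => w.getD a true = false ∧ w.getD (a + 1) false = true)).sup
    (fun a => z0 w (a + 1) * o1 w (a + 1))

/-- `φ₁(S) = Σᵢ Σ_{j=R_{i-1}+1}^{R_i} Σ_{k=1}^{T_i} 1/(j+k)`: the `j`-th `0` (at position `a`,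
so `j = z0 w (a+1)`) contributes `Σ_{k=1}^{T} 1/(j+k)` with `T` the number of `1`s to its right. -/
noncomputable def phi1 (w : Word) : ℝ :=
  ∑ a ∈ (Finset.range w.length).filter (fun a => w.getD a true = false),
    ∑ k ∈ Finset.Icc 1 (o1 w (a + 1)), (1 : ℝ) / ((z0 w (a + 1) : ℝ) + (k : ℝ))


/-- The set of `0`-positions of the hybrid zone. -/
def zset (w : Word) : Finset ℕ :=
  (Finset.range w.length).filter (fun a => w.getD a true = false)

/-- The set of `1`-positions of the hybrid zone. -/
def oset (w : Word) : Finset ℕ :=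
  (Finset.range w.length).filter (fun b => w.getD b false = true)

lemma z0_mono (w : Word) {c c' : ℕ} (h : c ≤ c') : z0 w c ≤ z0 w c' :=
  Finset.card_le_card (Finset.filter_subset_filter _ (Finset.range_subset_range.2 h))

lemma z0_succ (w : Word) {a : ℕ} (ha : w.getD a true = false) :
    z0 w (a + 1) = z0 w a + 1 := by
  unfold z0
  rw [Finset.range_add_one, Finset.filter_insert, if_pos ha,
    Finset.card_insert_of_notMem (by simp)]

lemma z0_length (w : Word) : z0 w w.length = (zset w).card := rfl

lemma o1_eq_card (w : Word) (c : ℕ) :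
    o1 w c = ((oset w).filter (fun b => c ≤ b)).card := by
  unfold o1 oset
  congr 1
  rw [Finset.filter_filter]
  ext b
  simp only [Finset.mem_filter, Finset.mem_Ico, Finset.mem_range]
  tauto

lemma z0_eq_card_of_le (w : Word) {b : ℕ} (hb : b ≤ w.length) :
    z0 w b = ((zset w).filter (fun a => a < b)).card := by
  unfold z0 zset
  congr 1
  rw [Finset.filter_filter]
  ext a
  simp only [Finset.mem_filter, Finset.mem_range]
  constructor
  · rintro ⟨h1, h2⟩
    exact ⟨lt_of_lt_of_le h1 hb, h2, h1⟩
  · rintro ⟨-, h2, h3⟩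
    exact ⟨h3, h2⟩

lemma f1_eq_sum_o1 (w : Word) : f1 w = ∑ a ∈ zset w, o1 w (a + 1) := by
  have : f1 w = ∑ b ∈ oset w, ((zset w).filter (fun a => a < b)).card := by
    refine Finset.sum_congr rfl fun b hb => ?_
    exact z0_eq_card_of_le w (le_of_lt (Finset.mem_range.1 (Finset.mem_filter.1 hb).1))
  rw [this]
  simp only [Finset.card_filter]
  rw [Finset.sum_comm]
  refine Finset.sum_congr rfl fun a _ => ?_
  rw [o1_eq_card, Finset.card_filter]
  refine Finset.sum_congr rfl fun b _ => ?_
  simp only [Nat.add_one_le_iff]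

section Main

variable {S : Word}

lemma getD_false_of_true {a : ℕ} (ha : a < S.length) (h : S.getD a false = true) :
    S.getD a true = true := by
  rw [List.getD_eq_getElem S true ha]
  rw [List.getD_eq_getElem S false ha] at h
  exact h

lemma getD_true_of_false {a : ℕ} (ha : a < S.length) (h : S.getD a false ≠ true) :
    S.getD a true = false := by
  rw [List.getD_eq_getElem S true ha]
  rw [List.getD_eq_getElem S false ha] at h
  simpa using h

lemma lt_length_sub_one (hL : S.getD (S.length - 1) false = true)
    {a : ℕ} (ha : a ∈ zset S) : a < S.length - 1 := by
  obtain ⟨ha1, ha2⟩ := Finset.mem_filter.1 ha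
  rw [Finset.mem_range] at ha1
  rcases lt_or_eq_of_le (Nat.le_sub_one_of_lt ha1) with h | h
  · exact h
  · exfalso
    rw [h] at ha2
    rw [getD_false_of_true (by omega) hL] at ha2
    simp at ha2

lemma t_pos (hL : S.getD (S.length - 1) false = true)
    {a : ℕ} (ha : a ∈ zset S) : 1 ≤ o1 S (a + 1) := by
  have h1 : a < S.length - 1 := lt_length_sub_one hL ha
  refine Finset.card_pos.2 ⟨S.length - 1, ?_⟩
  rw [Finset.mem_filter, Finset.mem_Ico]
  exact ⟨⟨by omega, by omega⟩, hL⟩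

lemma j_pos {a : ℕ} (ha : a ∈ zset S) : 1 ≤ z0 S (a + 1) := by
  obtain ⟨_, ha2⟩ := Finset.mem_filter.1 ha
  refine Finset.card_pos.2 ⟨a, ?_⟩
  rw [Finset.mem_filter, Finset.mem_range]
  exact ⟨Nat.lt_succ_self a, ha2⟩

lemma j_le {a : ℕ} (ha : a ∈ zset S) : z0 S (a + 1) ≤ (zset S).card := by
  obtain ⟨ha1, _⟩ := Finset.mem_filter.1 ha
  rw [Finset.mem_range] at ha1
  rw [← z0_length]
  exact z0_mono S (by omega)

lemma j_strictMono {a a' : ℕ} (_ha : a ∈ zset S) (ha' : a' ∈ zset S) (h : a < a') :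
    z0 S (a + 1) < z0 S (a' + 1) := by
  obtain ⟨_, h2'⟩ := Finset.mem_filter.1 ha'
  calc z0 S (a + 1) ≤ z0 S a' := z0_mono S (by omega)
    _ < z0 S a' + 1 := Nat.lt_succ_self _
    _ = z0 S (a' + 1) := (z0_succ S h2').symm

lemma corner_bound (hL : S.getD (S.length - 1) false = true)
    {a : ℕ} (ha : a ∈ zset S) :
    z0 S (a + 1) * o1 S (a + 1) ≤ gfun S := by
  obtain ⟨ha1, ha2⟩ := Finset.mem_filter.1 ha
  rw [Finset.mem_range] at ha1
  have haL : a < S.length - 1 := lt_length_sub_one hL ha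
  -- the first `1` strictly after `a`
  have hex : ∃ b, a < b ∧ S.getD b false = true := ⟨S.length - 1, haL, hL⟩
  classical
  set b0 := Nat.find hex with hb0def
  obtain ⟨hab0, hb0⟩ := Nat.find_spec hex
  have hb0le : b0 ≤ S.length - 1 := Nat.find_min' hex ⟨haL, hL⟩
  set a' := b0 - 1 with ha'def
  have haa' : a ≤ a' := by omega
  have ha'1 : a' + 1 = b0 := by omega
  have ha'len : a' < S.length := by omega
  have ha'0 : S.getD a' true = false := by
    rcases eq_or_lt_of_le haa' with h | h
    · rw [← h]; exact ha2
    · have := Nat.find_min hex (show a' < b0 by omega)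
      push_neg at this
      exact getD_true_of_false ha'len (this h)
  have hmem : a' ∈ (Finset.range S.length).filter
      (fun x => S.getD x true = false ∧ S.getD (x + 1) false = true) := by
    rw [Finset.mem_filter, Finset.mem_range]
    exact ⟨ha'len, ha'0, by rw [ha'1]; exact hb0⟩
  have ho1 : o1 S (a + 1) = o1 S (a' + 1) := by
    unfold o1
    congr 1
    ext b
    simp only [Finset.mem_filter, Finset.mem_Ico]
    constructor
    · rintro ⟨⟨h1, h2⟩, h3⟩
      have : b0 ≤ b := Nat.find_min' hex ⟨by omega, h3⟩
      exact ⟨⟨by omega, h2⟩, h3⟩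
    · rintro ⟨⟨h1, h2⟩, h3⟩
      exact ⟨⟨by omega, h2⟩, h3⟩
  calc z0 S (a + 1) * o1 S (a + 1) ≤ z0 S (a' + 1) * o1 S (a' + 1) := by
        rw [ho1]; exact Nat.mul_le_mul_right _ (z0_mono S (by omega))
    _ ≤ gfun S := Finset.le_sup (f := fun x => z0 S (x + 1) * o1 S (x + 1)) hmem

end Main

/-- Lemma 5: for every `S ∈ 𝒟 ∖ {𝒟₀}`, `f₁(S) ≥ g(S) ≥ f₁(S)/(1 + log f₁(S))`. -/
theorem g_vs_f1 (S : Word) (hS : IsConfig S) (hne : S ≠ groundState) :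
    (gfun S : ℝ) ≤ (f1 S : ℝ) ∧
    (f1 S : ℝ) / (1 + Real.log (f1 S)) ≤ (gfun S : ℝ) := by
  classical
  rcases hS with h | ⟨hhead, hlast⟩
  · exact absurd h hne
  have hlen : 0 < S.length := List.length_pos_iff.2 (by simpa [groundState] using hne)
  have h0 : S.getD 0 true = false := by
    obtain ⟨x, t, rfl⟩ : ∃ x t, S = x :: t := by
      cases S with
      | nil => simp at hlen
      | cons x t => exact ⟨x, t, rfl⟩
    simpa using hhead
  have hL : S.getD (S.length - 1) false = true := by
    rw [List.getLast?_eq_getElem?] at hlast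
    rw [List.getD_eq_getElem S false (by omega), ← Option.some_inj, ← hlast,
      List.getElem?_eq_getElem (by omega)]
  -- Part 1 : g ≤ f1
  have part1 : gfun S ≤ f1 S := by
    refine Finset.sup_le fun a ha => ?_
    obtain ⟨ha1, ha2, ha3⟩ :
        a ∈ Finset.range S.length ∧ S.getD a true = false ∧ S.getD (a + 1) false = true := by
      simpa using ha
    rw [Finset.mem_range] at ha1
    have key : z0 S (a + 1) * o1 S (a + 1)
        = ∑ _b ∈ (Finset.Ico (a + 1) S.length).filter (fun b => S.getD b false = true),
            z0 S (a + 1) := by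
      rw [Finset.sum_const, smul_eq_mul, mul_comm]; rfl
    rw [key]
    calc (∑ _b ∈ (Finset.Ico (a + 1) S.length).filter (fun b => S.getD b false = true),
            z0 S (a + 1))
        ≤ ∑ b ∈ (Finset.Ico (a + 1) S.length).filter (fun b => S.getD b false = true),
            z0 S b := by
          refine Finset.sum_le_sum fun b hb => ?_
          obtain ⟨hb1, _⟩ := Finset.mem_filter.1 hb
          exact z0_mono S (Finset.mem_Ico.1 hb1).1
      _ ≤ ∑ b ∈ (Finset.range S.length).filter (fun b => S.getD b false = true),
            z0 S b := by
          refine Finset.sum_le_sum_of_subset (Finset.filter_subset_filter _ ?_)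
          intro b hb
          rw [Finset.mem_range]
          exact (Finset.mem_Ico.1 hb).2
      _ = f1 S := rfl
  -- Setup for Part 2
  set R := (zset S).card with hRdef
  have h0mem : 0 ∈ zset S := Finset.mem_filter.2 ⟨Finset.mem_range.2 hlen, h0⟩
  have hR1 : 1 ≤ R := Finset.card_pos.2 ⟨0, h0mem⟩
  have hf1sum : f1 S = ∑ a ∈ zset S, o1 S (a + 1) := f1_eq_sum_o1 S
  have hRle : R ≤ f1 S := by
    rw [hf1sum]
    calc R = ∑ _a ∈ zset S, 1 := by rw [Finset.sum_const, smul_eq_mul, mul_one]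
      _ ≤ ∑ a ∈ zset S, o1 S (a + 1) := Finset.sum_le_sum fun a ha => t_pos hL ha
  have hf1pos : 1 ≤ f1 S := le_trans hR1 hRle
  have hlog0 : (0 : ℝ) ≤ Real.log (f1 S) := Real.log_nonneg (by exact_mod_cast hf1pos)
  have hden : (0 : ℝ) < 1 + Real.log (f1 S) := by linarith
  -- key inequality : f1 ≤ g * (1 + log f1)
  have key : (f1 S : ℝ) ≤ (gfun S : ℝ) * (1 + Real.log (f1 S)) := by
    have hinj : Set.InjOn (fun a => z0 S (a + 1)) (zset S) := by
      intro a ha a' ha' h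
      rcases lt_trichotomy a a' with hx | hx | hx
      · exact absurd h (Nat.ne_of_lt (j_strictMono ha ha' hx))
      · exact hx
      · exact absurd h.symm (Nat.ne_of_lt (j_strictMono ha' ha hx))
    calc (f1 S : ℝ) = ∑ a ∈ zset S, (o1 S (a + 1) : ℝ) := by
          rw [hf1sum]; push_cast; ring
      _ ≤ ∑ a ∈ zset S, (gfun S : ℝ) / (z0 S (a + 1) : ℝ) := by
          refine Finset.sum_le_sum fun a ha => ?_
          have hjpos : (0 : ℝ) < (z0 S (a + 1) : ℝ) := by
            exact_mod_cast j_pos ha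
          rw [le_div_iff₀ hjpos]
          have := corner_bound hL ha
          calc (o1 S (a + 1) : ℝ) * (z0 S (a + 1) : ℝ)
              = ((z0 S (a + 1) * o1 S (a + 1) : ℕ) : ℝ) := by push_cast; ring
            _ ≤ (gfun S : ℝ) := by exact_mod_cast this
      _ = (gfun S : ℝ) * ∑ a ∈ zset S, ((z0 S (a + 1) : ℝ))⁻¹ := by
          rw [Finset.mul_sum]
          exact Finset.sum_congr rfl fun a _ => div_eq_mul_inv _ _
      _ ≤ (gfun S : ℝ) * (harmonic R : ℝ) := by
          refine mul_le_mul_of_nonneg_left ?_ (Nat.cast_nonneg _)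
          have himg : ∑ a ∈ zset S, ((z0 S (a + 1) : ℝ))⁻¹
              = ∑ m ∈ (zset S).image (fun a => z0 S (a + 1)), ((m : ℝ))⁻¹ :=
            (Finset.sum_image (g := fun a => z0 S (a + 1)) (f := fun m : ℕ => ((m : ℝ))⁻¹) (fun a ha a' ha' h => hinj ha ha' h)).symm
          rw [himg]
          have hsub : (zset S).image (fun a => z0 S (a + 1)) ⊆ Finset.Icc 1 R := by
            intro m hm
            obtain ⟨a, ha, rfl⟩ := Finset.mem_image.1 hm
            exact Finset.mem_Icc.2 ⟨j_pos ha, j_le ha⟩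
          calc (∑ m ∈ (zset S).image (fun a => z0 S (a + 1)), ((m : ℝ))⁻¹)
              ≤ ∑ m ∈ Finset.Icc 1 R, ((m : ℝ))⁻¹ :=
                Finset.sum_le_sum_of_subset_of_nonneg hsub
                  (fun m _ _ => by positivity)
            _ = (harmonic R : ℝ) := by
                rw [harmonic_eq_sum_Icc]; push_cast; ring
      _ ≤ (gfun S : ℝ) * (1 + Real.log R) :=
          mul_le_mul_of_nonneg_left (harmonic_le_one_add_log R) (Nat.cast_nonneg _)
      _ ≤ (gfun S : ℝ) * (1 + Real.log (f1 S)) := by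
          refine mul_le_mul_of_nonneg_left ?_ (Nat.cast_nonneg _)
          have : Real.log (R : ℝ) ≤ Real.log (f1 S : ℝ) :=
            Real.log_le_log (by exact_mod_cast hR1) (by exact_mod_cast hRle)
          linarith
  exact ⟨by exact_mod_cast part1, (div_le_iff₀ hden).2 key⟩

end EV
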